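/- arXiv:0804.4245 — 2 statements merged into one kernel-verified Lean document; each statement's English description precedes it below -/
import Mathlib

section
/- Let N be a symmetric k×k matrix over the field ℤ/2, with k ≥ 1. Then the genus generating polynomial F_N(x) = Σ_{I ⊆ {1,…,k}} x^{corank N_I + corank N_{Iᶜ}} has degree at most k, and its degree is exactly k if and only if every diagonal entry of N is zero and the simple graph on {1, …, k} in which distinct i and j are adjacent exactly when N_{ij} = 1 is bipartite. -/
/-- The corank over `ℤ/2` of the principal submatrix of `N` on the rows and columns in `I`:
`|I| - rank N_I`. -/
noncomputable def subCorank {V : Type*} [Fintype V] [DecidableEq V]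
    (N : Matrix V V (ZMod 2)) (I : Finset V) : ℕ :=
  I.card - (N.submatrix (fun i : I => (i : V)) fun i : I => (i : V)).rank

/-- The genus generating polynomial of a symmetric matrix `N` over `ℤ/2`:
`F_N(x) = Σ_{I ⊆ V} x ^ (corank N_I + corank N_{V∖I})`. -/
noncomputable def genusPoly {V : Type*} [Fintype V] [DecidableEq V]
    (N : Matrix V V (ZMod 2)) : Polynomial ℕ :=
  ∑ I : Finset V, Polynomial.X ^ (subCorank N I + subCorank N Iᶜ)

/-- The simple graph of a symmetric `ℤ/2` matrix: distinct `i` and `j` are adjacent exactly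
when `N i j = 1`. -/
def adjGraph {V : Type*} (N : Matrix V V (ZMod 2)) (h : N.IsSymm) : SimpleGraph V where
  Adj i j := i ≠ j ∧ N i j = 1
  symm := ⟨by
    rintro i j ⟨h1, h2⟩
    exact ⟨h1.symm, by rw [h.apply i j]; exact h2⟩⟩
  loopless := ⟨fun i hi => hi.1 rfl⟩

private lemma matrix_rank_zero_iff {m : Type*} [Fintype m] [DecidableEq m]
    (A : Matrix m m (ZMod 2)) : A.rank = 0 ↔ A = 0 := by
  constructor
  · intro h
    have h2 : LinearMap.range A.mulVecLin = ⊥ := Submodule.finrank_eq_zero.mp h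
    have h3 : A.mulVecLin = 0 := LinearMap.range_eq_bot.mp h2
    ext i j
    have hcol : A.mulVec (Pi.single j 1) = 0 := by
      have : A.mulVecLin (Pi.single j 1) = 0 := by rw [h3]; rfl
      simpa [Matrix.mulVecLin_apply] using this
    have := congrFun hcol i
    simpa using this
  · rintro rfl; exact Matrix.rank_zero

private lemma subCorank_le' {V : Type*} [Fintype V] [DecidableEq V]
    (N : Matrix V V (ZMod 2)) (I : Finset V) : subCorank N I ≤ I.card :=
  Nat.sub_le _ _

private lemma subCorank_eq_card_iff {V : Type*} [Fintype V] [DecidableEq V]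
    (N : Matrix V V (ZMod 2)) (I : Finset V) :
    subCorank N I = I.card ↔ ∀ i ∈ I, ∀ j ∈ I, N i j = 0 := by
  have hr : (N.submatrix (fun i : I => (i : V)) fun i : I => (i : V)).rank ≤ I.card := by
    simpa [Fintype.card_coe] using
      (N.submatrix (fun i : I => (i : V)) fun i : I => (i : V)).rank_le_card_width
  have h1 : subCorank N I = I.card ↔
      (N.submatrix (fun i : I => (i : V)) fun i : I => (i : V)).rank = 0 := by
    unfold subCorank; omega
  rw [h1, matrix_rank_zero_iff]
  constructor
  · intro h i hi j hj
    have := congrFun (congrFun h ⟨i, hi⟩) ⟨j, hj⟩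
    simpa using this
  · intro h
    ext ⟨i, hi⟩ ⟨j, hj⟩
    simpa using h i hi j hj

private lemma genusPoly_coeff {V : Type*} [Fintype V] [DecidableEq V]
    (N : Matrix V V (ZMod 2)) (m : ℕ) :
    (genusPoly N).coeff m =
      (Finset.univ.filter
        fun I : Finset V => subCorank N I + subCorank N Iᶜ = m).card := by
  rw [genusPoly, Polynomial.finset_sum_coeff]
  rw [Finset.card_filter]
  simp [Polynomial.coeff_X_pow, eq_comm]

/-- For a symmetric `k × k` matrix `N` over `ℤ/2` with `k ≥ 1`, the genus generating
polynomial `F_N` has degree at most `k`, with equality if and only if every diagonal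
entry of `N` is zero and the graph of `N` is bipartite. -/
theorem genusPoly_natDegree_le_and_eq_iff (k : ℕ) (hk : 1 ≤ k)
    (N : Matrix (Fin k) (Fin k) (ZMod 2)) (hN : N.IsSymm) :
    (genusPoly N).natDegree ≤ k ∧
      ((genusPoly N).natDegree = k ↔
        (∀ i, N i i = 0) ∧ (adjGraph N hN).Colorable 2) := by
  classical
  have hcards : ∀ I : Finset (Fin k), I.card + Iᶜ.card = k := by
    intro I
    simp [I.card_add_card_compl]
  have hele : ∀ I : Finset (Fin k), subCorank N I + subCorank N Iᶜ ≤ k := by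
    intro I
    have h1 := subCorank_le' N I
    have h2 := subCorank_le' N Iᶜ
    have := hcards I
    omega
  have hle : (genusPoly N).natDegree ≤ k := by
    apply Polynomial.natDegree_sum_le_of_forall_le
    intro I _
    simpa [Polynomial.natDegree_X_pow] using hele I
  have hexists : (∃ I : Finset (Fin k), subCorank N I + subCorank N Iᶜ = k) ↔
      (∀ i, N i i = 0) ∧ (adjGraph N hN).Colorable 2 := by
    constructor
    · rintro ⟨I, hI⟩
      have h1 := subCorank_le' N I
      have h2 := subCorank_le' N Iᶜ
      have hc := hcards I
      have e1 : subCorank N I = I.card := by omega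
      have e2 : subCorank N Iᶜ = Iᶜ.card := by omega
      have z1 := (subCorank_eq_card_iff N I).mp e1
      have z2 := (subCorank_eq_card_iff N Iᶜ).mp e2
      constructor
      · intro i
        by_cases hi : i ∈ I
        · exact z1 i hi i hi
        · exact z2 i (Finset.mem_compl.mpr hi) i (Finset.mem_compl.mpr hi)
      · refine ⟨SimpleGraph.Coloring.mk (fun v => if v ∈ I then 0 else 1) ?_⟩
        rintro v w ⟨hvw, hNvw⟩
        by_cases hv : v ∈ I <;> by_cases hw : w ∈ I
        · exact absurd hNvw (by rw [z1 v hv w hw]; decide)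
        · simp [hv, hw]
        · simp [hv, hw]
        · exact absurd hNvw
            (by rw [z2 v (Finset.mem_compl.mpr hv) w (Finset.mem_compl.mpr hw)]; decide)
    · rintro ⟨hdiag, ⟨C⟩⟩
      set I : Finset (Fin k) := Finset.univ.filter (fun v => C v = 0) with hIdef
      have hmem : ∀ v, v ∈ I ↔ C v = 0 := by
        intro v; simp [hIdef]
      have hmemc : ∀ v, v ∈ Iᶜ ↔ C v = 1 := by
        intro v
        rw [Finset.mem_compl, hmem]
        have : C v = 0 ∨ C v = 1 := by omega
        constructor
        · intro h; tauto
        · intro h h0; rw [h0] at h; exact absurd h (by decide)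
      have hzmod : ∀ x : ZMod 2, x ≠ 1 → x = 0 := by decide
      have z1 : ∀ i ∈ I, ∀ j ∈ I, N i j = 0 := by
        intro i hi j hj
        by_cases hij : i = j
        · subst hij; exact hdiag i
        · refine hzmod _ fun h1 => ?_
          exact C.valid (⟨hij, h1⟩ : (adjGraph N hN).Adj i j)
            (by rw [(hmem i).mp hi, (hmem j).mp hj])
      have z2 : ∀ i ∈ Iᶜ, ∀ j ∈ Iᶜ, N i j = 0 := by
        intro i hi j hj
        by_cases hij : i = j
        · subst hij; exact hdiag i
        · refine hzmod _ fun h1 => ?_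
          exact C.valid (⟨hij, h1⟩ : (adjGraph N hN).Adj i j)
            (by rw [(hmemc i).mp hi, (hmemc j).mp hj])
      refine ⟨I, ?_⟩
      rw [(subCorank_eq_card_iff N I).mpr z1, (subCorank_eq_card_iff N Iᶜ).mpr z2]
      exact hcards I
  refine ⟨hle, ?_⟩
  rw [← hexists]
  constructor
  · intro hdeg
    have hne : genusPoly N ≠ 0 := by
      intro h0
      rw [h0, Polynomial.natDegree_zero] at hdeg
      omega
    have hcoeff : (genusPoly N).coeff ((genusPoly N).natDegree) ≠ 0 :=
      Polynomial.leadingCoeff_ne_zero.mpr hne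
    rw [hdeg] at hcoeff
    rw [genusPoly_coeff] at hcoeff
    obtain ⟨I, hI⟩ := Finset.card_ne_zero.mp hcoeff
    exact ⟨I, (Finset.mem_filter.mp hI).2⟩
  · rintro ⟨I, hI⟩
    refine le_antisymm hle ?_
    apply Polynomial.le_natDegree_of_ne_zero
    rw [genusPoly_coeff]
    refine Finset.card_ne_zero.mpr ⟨I, ?_⟩
    simp [hI]
end

section
/- Let M be a symmetric k×k matrix and M' a symmetric k'×k' matrix, both over the field ℤ/2, and let M ⊕ M' denote the block-diagonal symmetric (k+k')×(k+k') matrix with blocks M and M'. Then the genus generating polynomials are multiplicative: F_{M ⊕ M'} = F_M · F_{M'}. (This expresses that the generating function for embedding genera is multiplicative with respect to the connected-sum product in the chord diagram algebra and the graph algebra, since the intersection graph of a connected sum of chord diagrams is the disjoint union of the intersection graphs.) -/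
open Matrix LinearMap

/-- The submodule `p.prod q` is linearly equivalent to `p × q`. -/
def submoduleProdEquiv {R M M' : Type*} [Ring R] [AddCommGroup M] [AddCommGroup M']
    [Module R M] [Module R M'] (p : Submodule R M) (q : Submodule R M') :
    (p.prod q) ≃ₗ[R] p × q where
  toFun x := (⟨x.1.1, x.2.1⟩, ⟨x.1.2, x.2.2⟩)
  invFun y := ⟨(y.1.1, y.2.1), y.1.2, y.2.2⟩
  map_add' _ _ := rfl
  map_smul' _ _ := rfl
  left_inv _ := rfl
  right_inv _ := rfl

lemma range_prodMap' {R M M₂ M₃ M₄ : Type*} [CommRing R] [AddCommGroup M] [AddCommGroup M₂]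
    [AddCommGroup M₃] [AddCommGroup M₄] [Module R M] [Module R M₂] [Module R M₃] [Module R M₄]
    (f : M →ₗ[R] M₂) (g : M₃ →ₗ[R] M₄) :
    range (f.prodMap g) = (range f).prod (range g) := by
  ext ⟨x, y⟩
  simp only [mem_range, Submodule.mem_prod, LinearMap.prodMap_apply, Prod.mk.injEq, Prod.exists]
  constructor
  · rintro ⟨a, b, ha, hb⟩; exact ⟨⟨a, ha⟩, ⟨b, hb⟩⟩
  · rintro ⟨⟨a, ha⟩, ⟨b, hb⟩⟩; exact ⟨a, b, ha, hb⟩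

lemma rank_fromBlocks_diag {m n : Type*} [Fintype m] [Fintype n] [DecidableEq m] [DecidableEq n]
    {F : Type*} [Field F] (A : Matrix m m F) (B : Matrix n n F) :
    (fromBlocks A 0 0 B).rank = A.rank + B.rank := by
  set e := LinearEquiv.sumArrowLequivProdArrow m n F F
  have h : (fromBlocks A 0 0 B).mulVecLin =
      (e.symm.toLinearMap.comp ((A.mulVecLin.prodMap B.mulVecLin).comp e.toLinearMap)) := by
    apply LinearMap.ext; intro v
    funext i
    cases i <;>
      simp [e, Matrix.fromBlocks_mulVec, Matrix.mulVecLin_apply,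
        Equiv.sumArrowEquivProdArrow, LinearEquiv.sumArrowLequivProdArrow]
  rw [Matrix.rank, h, LinearMap.range_comp, LinearMap.range_comp, LinearEquiv.range,
    Submodule.map_top, LinearEquiv.finrank_map_eq, range_prodMap',
    (submoduleProdEquiv _ _).finrank_eq, Module.finrank_prod, Matrix.rank, Matrix.rank]

/-- The coercion of `s.disjSum t` is equivalent to `↥s ⊕ ↥t`. -/
def disjSumEquiv {α β : Type*} (s : Finset α) (t : Finset β) : ↥(s.disjSum t) ≃ ↥s ⊕ ↥t where
  toFun x := match x with
    | ⟨.inl a, h⟩ => .inl ⟨a, Finset.inl_mem_disjSum.1 h⟩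
    | ⟨.inr b, h⟩ => .inr ⟨b, Finset.inr_mem_disjSum.1 h⟩
  invFun := Sum.elim (fun a => ⟨.inl a.1, Finset.inl_mem_disjSum.2 a.2⟩)
    (fun b => ⟨.inr b.1, Finset.inr_mem_disjSum.2 b.2⟩)
  left_inv := by rintro ⟨a | b, h⟩ <;> rfl
  right_inv := by rintro (a | b) <;> rfl

lemma compl_disjSum {α β : Type*} [Fintype α] [Fintype β] [DecidableEq α] [DecidableEq β]
    (s : Finset α) (t : Finset β) : (s.disjSum t)ᶜ = sᶜ.disjSum tᶜ := by
  ext x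
  cases x <;> simp

lemma subCorank_disjSum {k k' : ℕ} (M : Matrix (Fin k) (Fin k) (ZMod 2))
    (M' : Matrix (Fin k') (Fin k') (ZMod 2)) (s : Finset (Fin k)) (t : Finset (Fin k')) :
    subCorank (fromBlocks M 0 0 M') (s.disjSum t) = subCorank M s + subCorank M' t := by
  have hsub : ((fromBlocks M 0 0 M').submatrix
        (fun i : ↥(s.disjSum t) => (i : Fin k ⊕ Fin k'))
        (fun i : ↥(s.disjSum t) => (i : Fin k ⊕ Fin k')))
      = (fromBlocks (M.submatrix (fun i : s => (i : Fin k)) (fun i : s => (i : Fin k))) 0 0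
          (M'.submatrix (fun i : t => (i : Fin k')) (fun i : t => (i : Fin k')))).submatrix
        (disjSumEquiv s t) (disjSumEquiv s t) := by
    ext ⟨x, hx⟩ ⟨y, hy⟩
    cases x <;> cases y <;> rfl
  have hrank : ((fromBlocks M 0 0 M').submatrix
        (fun i : ↥(s.disjSum t) => (i : Fin k ⊕ Fin k'))
        (fun i : ↥(s.disjSum t) => (i : Fin k ⊕ Fin k'))).rank
      = (M.submatrix (fun i : s => (i : Fin k)) (fun i : s => (i : Fin k))).rank
        + (M'.submatrix (fun i : t => (i : Fin k')) (fun i : t => (i : Fin k'))).rank := by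
    rw [hsub, Matrix.rank_submatrix, rank_fromBlocks_diag]
  have h1 : (M.submatrix (fun i : s => (i : Fin k)) (fun i : s => (i : Fin k))).rank ≤ s.card := by
    simpa [Fintype.card_coe] using
      (M.submatrix (fun i : s => (i : Fin k)) (fun i : s => (i : Fin k))).rank_le_card_height
  have h2 : (M'.submatrix (fun i : t => (i : Fin k')) (fun i : t => (i : Fin k'))).rank
      ≤ t.card := by
    simpa [Fintype.card_coe] using
      (M'.submatrix (fun i : t => (i : Fin k')) (fun i : t => (i : Fin k'))).rank_le_card_height
  unfold subCorank
  rw [Finset.card_disjSum, hrank]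
  omega

/-- Pairs of finsets are equivalent to finsets of a sum type. -/
def finsetSumEquiv {α β : Type*} : Finset (α ⊕ β) ≃ Finset α × Finset β where
  toFun I := (I.toLeft, I.toRight)
  invFun p := p.1.disjSum p.2
  left_inv I := Finset.toLeft_disjSum_toRight
  right_inv p := by simp

/-- **Multiplicativity of the genus generating polynomial.**  For symmetric matrices `M`
(of size `k × k`) and `M'` (of size `k' × k'`) over `ℤ/2`, the genus generating polynomial
of the block-diagonal matrix `M ⊕ M'` is the product of the genus generating polynomials:
`F_{M ⊕ M'} = F_M · F_{M'}`. -/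
theorem genusPoly_blockDiag_mul (k k' : ℕ)
    (M : Matrix (Fin k) (Fin k) (ZMod 2)) (hM : M.IsSymm)
    (M' : Matrix (Fin k') (Fin k') (ZMod 2)) (hM' : M'.IsSymm) :
    genusPoly (Matrix.fromBlocks M 0 0 M') = genusPoly M * genusPoly M' := by
  unfold genusPoly
  have key : ∀ I : Finset (Fin k ⊕ Fin k'),
      (Polynomial.X : Polynomial ℕ) ^ (subCorank (Matrix.fromBlocks M 0 0 M') I
        + subCorank (Matrix.fromBlocks M 0 0 M') Iᶜ)
      = (fun p : Finset (Fin k) × Finset (Fin k') =>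
          Polynomial.X ^ (subCorank M p.1 + subCorank M p.1ᶜ) *
          Polynomial.X ^ (subCorank M' p.2 + subCorank M' p.2ᶜ)) (finsetSumEquiv I) := by
    intro I
    conv_lhs => rw [← Finset.toLeft_disjSum_toRight (u := I)]
    rw [compl_disjSum, subCorank_disjSum, subCorank_disjSum]
    simp only [finsetSumEquiv, Equiv.coe_fn_mk, ← pow_add]
    congr 1
    omega
  rw [Fintype.sum_equiv finsetSumEquiv _
      (fun p : Finset (Fin k) × Finset (Fin k') =>
        (Polynomial.X : Polynomial ℕ) ^ (subCorank M p.1 + subCorank M p.1ᶜ) *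
        Polynomial.X ^ (subCorank M' p.2 + subCorank M' p.2ᶜ)) key,
    Finset.sum_mul_sum, Fintype.sum_prod_type]
end
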